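/- Let $f(z) = \int \varphi(z - u)\, dG(u)$ be a mixture of standard normal densities. Then for all $z$ with $f(z) > 0$: $0 \leq f''(z)/f(z) + 1 \leq -\log(2\pi f(z)^2)$. -/

import Mathlib

open MeasureTheory

noncomputable def gphi (x : ℝ) : ℝ :=
  (Real.sqrt (2 * Real.pi))⁻¹ * Real.exp (-(x ^ 2) / 2)

lemma gphi_pos (x : ℝ) : 0 < gphi x := by
  have h : 0 < Real.sqrt (2 * Real.pi) :=
    Real.sqrt_pos.2 (by positivity)
  exact mul_pos (inv_pos.2 h) (Real.exp_pos _)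

lemma sqrt2pi_ge_one : 1 ≤ Real.sqrt (2 * Real.pi) := by
  rw [show (1 : ℝ) = Real.sqrt 1 by simp]
  exact Real.sqrt_le_sqrt (by nlinarith [Real.pi_gt_three])

lemma gphi_le_one (x : ℝ) : gphi x ≤ 1 := by
  have h1 : (Real.sqrt (2 * Real.pi))⁻¹ ≤ 1 := by
    rw [inv_le_one_iff₀]; right; exact sqrt2pi_ge_one
  have h2 : Real.exp (-(x ^ 2) / 2) ≤ 1 := by
    rw [Real.exp_le_one_iff]; nlinarith [sq_nonneg x]
  have h3 : 0 < Real.exp (-(x ^ 2) / 2) := Real.exp_pos _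
  unfold gphi
  calc (Real.sqrt (2 * Real.pi))⁻¹ * Real.exp (-(x ^ 2) / 2) ≤ 1 * 1 :=
        mul_le_mul h1 h2 h3.le (by linarith)
    _ = 1 := by ring

lemma gphi_cont : Continuous gphi := by
  unfold gphi; fun_prop

lemma gphi_hasDeriv (x : ℝ) : HasDerivAt gphi (-x * gphi x) x := by
  have h1 : HasDerivAt (fun x : ℝ => -(x ^ 2) / 2) (-x) x := by
    have := ((hasDerivAt_pow 2 x).neg).div_const 2
    exact this.congr_deriv (by push_cast; ring)
  have h2 := (h1.exp).const_mul (Real.sqrt (2 * Real.pi))⁻¹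
  have : gphi = fun x => (Real.sqrt (2 * Real.pi))⁻¹ * Real.exp (-(x ^ 2) / 2) := rfl
  rw [this]
  refine h2.congr_deriv ?_
  show _ = -x * ((Real.sqrt (2 * Real.pi))⁻¹ * Real.exp (-(x ^ 2) / 2))
  ring

lemma gphi_hasDeriv2 (x : ℝ) :
    HasDerivAt (fun x => -x * gphi x) ((x ^ 2 - 1) * gphi x) x := by
  have h := ((hasDerivAt_id x).neg).mul (gphi_hasDeriv x)
  have he : (x ^ 2 - 1) * gphi x = -1 * gphi x + -x * (-x * gphi x) := by ring
  rw [he]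
  exact h

lemma abs_mul_gphi_le (x : ℝ) : ‖-x * gphi x‖ ≤ 1 := by
  have h1 : |x| ≤ Real.exp (x ^ 2 / 2) := by
    have := Real.add_one_le_exp (x ^ 2 / 2)
    nlinarith [abs_nonneg x, sq_abs x, sq_nonneg (|x| - 1)]
  have h2 : gphi x ≤ 1 := gphi_le_one x
  have hp := gphi_pos x
  have hinv : (Real.sqrt (2 * Real.pi))⁻¹ ≤ 1 := by
    rw [inv_le_one_iff₀]; right; exact sqrt2pi_ge_one
  have he : Real.exp (-(x ^ 2) / 2) = (Real.exp (x ^ 2 / 2))⁻¹ := by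
    rw [← Real.exp_neg]; ring_nf
  rw [norm_mul, norm_neg, Real.norm_eq_abs, Real.norm_eq_abs, abs_of_pos hp]
  unfold gphi
  rw [he]
  have hep : 0 < Real.exp (x ^ 2 / 2) := Real.exp_pos _
  have h3 : |x| * (Real.exp (x ^ 2 / 2))⁻¹ ≤ 1 := by
    rw [mul_inv_le_iff₀ hep, one_mul]; exact h1
  have hinv2 : (0:ℝ) < (Real.sqrt (2 * Real.pi))⁻¹ := by positivity
  calc |x| * ((Real.sqrt (2 * Real.pi))⁻¹ * (Real.exp (x ^ 2 / 2))⁻¹)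
      ≤ |x| * (1 * (Real.exp (x ^ 2 / 2))⁻¹) := by
        apply mul_le_mul_of_nonneg_left _ (abs_nonneg x)
        apply mul_le_mul_of_nonneg_right hinv (by positivity)
    _ = |x| * (Real.exp (x ^ 2 / 2))⁻¹ := by ring
    _ ≤ 1 := h3

lemma sq_mul_gphi_le (x : ℝ) : x ^ 2 * gphi x ≤ 2 := by
  have h1 : x ^ 2 / 2 ≤ Real.exp (x ^ 2 / 2) := by
    have := Real.add_one_le_exp (x ^ 2 / 2)
    linarith
  have hinv : (Real.sqrt (2 * Real.pi))⁻¹ ≤ 1 := by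
    rw [inv_le_one_iff₀]; right; exact sqrt2pi_ge_one
  have hinv2 : (0:ℝ) < (Real.sqrt (2 * Real.pi))⁻¹ := by positivity
  have hep : 0 < Real.exp (x ^ 2 / 2) := Real.exp_pos _
  have he : Real.exp (-(x ^ 2) / 2) = (Real.exp (x ^ 2 / 2))⁻¹ := by
    rw [← Real.exp_neg]; ring_nf
  have h2 : x ^ 2 * (Real.exp (x ^ 2 / 2))⁻¹ ≤ 2 := by
    rw [mul_inv_le_iff₀ hep]; linarith
  unfold gphi
  rw [he]
  calc x ^ 2 * ((Real.sqrt (2 * Real.pi))⁻¹ * (Real.exp (x ^ 2 / 2))⁻¹)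
      ≤ x ^ 2 * (1 * (Real.exp (x ^ 2 / 2))⁻¹) := by
        apply mul_le_mul_of_nonneg_left _ (sq_nonneg x)
        apply mul_le_mul_of_nonneg_right hinv (by positivity)
    _ = x ^ 2 * (Real.exp (x ^ 2 / 2))⁻¹ := by ring
    _ ≤ 2 := h2

lemma abs_sq_gphi_le (x : ℝ) : ‖(x ^ 2 - 1) * gphi x‖ ≤ 3 := by
  have hp := gphi_pos x
  rw [norm_mul, Real.norm_eq_abs, Real.norm_eq_abs, abs_of_pos hp]
  have h1 : |x ^ 2 - 1| ≤ x ^ 2 + 1 := by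
    rw [abs_le]; constructor <;> nlinarith [sq_nonneg x]
  calc |x ^ 2 - 1| * gphi x ≤ (x ^ 2 + 1) * gphi x :=
        mul_le_mul_of_nonneg_right h1 hp.le
    _ = x ^ 2 * gphi x + gphi x := by ring
    _ ≤ 2 + 1 := add_le_add (sq_mul_gphi_le x) (gphi_le_one x)
    _ = 3 := by norm_num

lemma log_gphi (x : ℝ) :
    Real.log (gphi x) = Real.log (Real.sqrt (2 * Real.pi))⁻¹ - x ^ 2 / 2 := by
  unfold gphi
  rw [Real.log_mul (by positivity) (Real.exp_ne_zero _), Real.log_exp]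
  ring

lemma gphi_mul_log (x : ℝ) :
    x ^ 2 * gphi x =
      2 * Real.log (Real.sqrt (2 * Real.pi))⁻¹ * gphi x
        - 2 * (gphi x * Real.log (gphi x)) := by
  rw [log_gphi]; ring

lemma abs_gphi_mul_log_le (x : ℝ) :
    ‖gphi x * Real.log (gphi x)‖ ≤ |Real.log (Real.sqrt (2 * Real.pi))⁻¹| + 1 := by
  have hp := gphi_pos x
  rw [norm_mul, Real.norm_eq_abs, Real.norm_eq_abs, abs_of_pos hp, log_gphi]
  have h1 : |Real.log (Real.sqrt (2 * Real.pi))⁻¹ - x ^ 2 / 2|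
      ≤ |Real.log (Real.sqrt (2 * Real.pi))⁻¹| + x ^ 2 / 2 := by
    refine (abs_sub _ _).trans ?_
    simp [abs_of_nonneg (by positivity : (0:ℝ) ≤ x ^ 2 / 2)]
  have h2 := gphi_le_one x
  have h3 := sq_mul_gphi_le x
  calc gphi x * |Real.log (Real.sqrt (2 * Real.pi))⁻¹ - x ^ 2 / 2|
      ≤ gphi x * (|Real.log (Real.sqrt (2 * Real.pi))⁻¹| + x ^ 2 / 2) :=
        mul_le_mul_of_nonneg_left h1 hp.le
    _ = gphi x * |Real.log (Real.sqrt (2 * Real.pi))⁻¹| + x ^ 2 * gphi x / 2 := by ring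
    _ ≤ 1 * |Real.log (Real.sqrt (2 * Real.pi))⁻¹| + 2 / 2 := by
        gcongr
    _ = |Real.log (Real.sqrt (2 * Real.pi))⁻¹| + 1 := by ring

lemma integrable_of_bdd {G : Measure ℝ} [IsFiniteMeasure G] {h : ℝ → ℝ} {C : ℝ}
    (hc : Continuous h) (hb : ∀ x, ‖h x‖ ≤ C) : Integrable h G :=
  (integrable_const C).mono' hc.aestronglyMeasurable (ae_of_all _ hb)

theorem stmt8
    (G : Measure ℝ) [IsProbabilityMeasure G]
    (φ f : ℝ → ℝ)
    (hφ : ∀ x, φ x = (Real.sqrt (2 * Real.pi))⁻¹ * Real.exp (-(x ^ 2) / 2))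
    (hf : ∀ z, f z = ∫ u, φ (z - u) ∂G) :
    ∀ z, 0 < f z →
      0 ≤ deriv (deriv f) z / f z + 1
      ∧ deriv (deriv f) z / f z + 1 ≤ -Real.log (2 * Real.pi * (f z) ^ 2) := by
  have hφg : φ = gphi := funext fun x => by rw [hφ x]; rfl
  subst hφg
  intro z hz
  have hcont0 : ∀ w : ℝ, Continuous (fun u : ℝ => gphi (w - u)) := fun w =>
    gphi_cont.comp (continuous_const.sub continuous_id)
  have hmeas : ∀ w : ℝ, AEStronglyMeasurable (fun u => gphi (w - u)) G := fun w =>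
    (hcont0 w).aestronglyMeasurable
  have hint0 : ∀ w : ℝ, Integrable (fun u => gphi (w - u)) G := fun w =>
    integrable_of_bdd (hcont0 w) (fun u => by
      rw [Real.norm_eq_abs, abs_of_pos (gphi_pos _)]; exact gphi_le_one _)
  have hcont1 : ∀ w : ℝ, Continuous (fun u : ℝ => -(w - u) * gphi (w - u)) := fun w =>
    ((continuous_const.sub continuous_id).neg).mul (hcont0 w)
  have hint1 : ∀ w : ℝ, Integrable (fun u => -(w - u) * gphi (w - u)) G := fun w =>
    integrable_of_bdd (hcont1 w) (fun u => abs_mul_gphi_le _)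
  -- first derivative
  have hderiv1 : ∀ w : ℝ, HasDerivAt f (∫ u, -(w - u) * gphi (w - u) ∂G) w := by
    intro w
    have hcomp : ∀ (a x : ℝ),
        HasDerivAt (fun x => gphi (x - a)) (-(x - a) * gphi (x - a)) x := by
      intro a x
      have := (gphi_hasDeriv (x - a)).comp x ((hasDerivAt_id x).sub_const a)
      simpa [Function.comp_def] using this
    have key := hasDerivAt_integral_of_dominated_loc_of_deriv_le
      (F := fun w u => gphi (w - u))
      (F' := fun w u => -(w - u) * gphi (w - u)) (bound := fun _ => 1)
      (x₀ := w) (μ := G) Filter.univ_mem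
      (Filter.Eventually.of_forall fun x => hmeas x)
      (hint0 w)
      ((hcont1 w).aestronglyMeasurable)
      (ae_of_all _ fun a x _ => abs_mul_gphi_le _)
      (integrable_const 1)
      (ae_of_all _ fun a x _ => hcomp a x)
    have hfe : f = fun w => ∫ u, gphi (w - u) ∂G := funext hf
    rw [hfe]; exact key.2
  have hd1 : deriv f = fun w => ∫ u, -(w - u) * gphi (w - u) ∂G :=
    funext fun w => (hderiv1 w).deriv
  -- second derivative
  have hderiv2 : HasDerivAt (fun w => ∫ u, -(w - u) * gphi (w - u) ∂G)
      (∫ u, ((z - u) ^ 2 - 1) * gphi (z - u) ∂G) z := by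
    have hcomp : ∀ (a x : ℝ),
        HasDerivAt (fun x => -(x - a) * gphi (x - a))
          (((x - a) ^ 2 - 1) * gphi (x - a)) x := by
      intro a x
      have h := (gphi_hasDeriv2 (x - a)).comp x ((hasDerivAt_id x).sub_const a)
      simp only [Function.comp_def] at h
      rw [mul_one] at h
      exact h
    have key := hasDerivAt_integral_of_dominated_loc_of_deriv_le
      (F := fun w u => -(w - u) * gphi (w - u))
      (F' := fun w u => ((w - u) ^ 2 - 1) * gphi (w - u)) (bound := fun _ => 3)
      (x₀ := z) (μ := G) Filter.univ_mem
      (Filter.Eventually.of_forall fun x => (hcont1 x).aestronglyMeasurable)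
      (hint1 z)
      ((((continuous_const.sub continuous_id).pow 2).sub continuous_const).mul
        (hcont0 z)).aestronglyMeasurable
      (ae_of_all _ fun a x _ => abs_sq_gphi_le _)
      (integrable_const 3)
      (ae_of_all _ fun a x _ => hcomp a x)
    exact key.2
  have hdd2 : deriv (deriv f) z = ∫ u, ((z - u) ^ 2 - 1) * gphi (z - u) ∂G := by
    rw [hd1]; exact hderiv2.deriv
  -- split the integral
  have hintsq : Integrable (fun u => (z - u) ^ 2 * gphi (z - u)) G :=
    integrable_of_bdd (((continuous_const.sub continuous_id).pow 2).mul (hcont0 z))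
      (fun u => by
        rw [Real.norm_eq_abs,
          abs_of_nonneg (mul_nonneg (sq_nonneg _) (gphi_pos _).le)]
        exact sq_mul_gphi_le _)
  set A := ∫ u, (z - u) ^ 2 * gphi (z - u) ∂G with hA_def
  have hsplit : ∫ u, ((z - u) ^ 2 - 1) * gphi (z - u) ∂G = A - f z := by
    rw [hf z, ← integral_sub hintsq (hint0 z)]
    congr 1; funext u; ring
  have hA0 : 0 ≤ A := integral_nonneg fun u => mul_nonneg (sq_nonneg _) (gphi_pos _).le
  -- Jensen
  have hlogcont : Continuous (fun u : ℝ => gphi (z - u) * Real.log (gphi (z - u))) :=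
    Real.continuous_mul_log.comp (hcont0 z)
  have hlogint : Integrable (fun u => gphi (z - u) * Real.log (gphi (z - u))) G :=
    integrable_of_bdd hlogcont (fun u => abs_gphi_mul_log_le _)
  have hjensen : f z * Real.log (f z)
      ≤ ∫ u, gphi (z - u) * Real.log (gphi (z - u)) ∂G := by
    have := Real.convexOn_mul_log.map_integral_le (μ := G) (f := fun u => gphi (z - u))
      Real.continuous_mul_log.continuousOn isClosed_Ici
      (ae_of_all _ fun u => Set.mem_Ici.2 (gphi_pos _).le)
      (hint0 z) hlogint
    rw [hf z]; simpa using this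
  have hA : A = 2 * Real.log (Real.sqrt (2 * Real.pi))⁻¹ * f z
      - 2 * ∫ u, gphi (z - u) * Real.log (gphi (z - u)) ∂G := by
    rw [hA_def, hf z]
    rw [show (fun u => (z - u) ^ 2 * gphi (z - u))
        = fun u => 2 * Real.log (Real.sqrt (2 * Real.pi))⁻¹ * gphi (z - u)
          - 2 * (gphi (z - u) * Real.log (gphi (z - u))) from
      funext fun u => gphi_mul_log (z - u)]
    rw [integral_sub ((hint0 z).const_mul _) (hlogint.const_mul 2),
      integral_const_mul, integral_const_mul]
  have hkey : deriv (deriv f) z / f z + 1 = A / f z := by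
    rw [hdd2, hsplit]; field_simp; ring
  have hlogc : Real.log (Real.sqrt (2 * Real.pi))⁻¹ = -(Real.log (2 * Real.pi) / 2) := by
    rw [Real.log_inv, Real.log_sqrt (by positivity)]
  have hlog2 : Real.log (2 * Real.pi * (f z) ^ 2)
      = Real.log (2 * Real.pi) + 2 * Real.log (f z) := by
    rw [Real.log_mul (by positivity) (by positivity), Real.log_pow]
    push_cast; ring
  constructor
  · rw [hkey]; exact div_nonneg hA0 hz.le
  · rw [hkey, div_le_iff₀ hz, hlog2]
    rw [hlogc] at hA
    nlinarith [hjensen, hA]
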